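/- (Planar chain rule) Let g ∈ K{{x}} with ord_x(g) ≥ 1, let φ = φ_g : K{{x}} → K{{x}} be the continuous K-algebra homomorphism with φ(x) = g, and let dφ : K{{x,y} → K{{x,y} be the unique continuous K-algebra homomorphism with dφ(x) = g and dφ(y) = dg. Then (dφ) ∘ d = d ∘ φ as maps K{{x}} → K{{x,y}. -/

import Mathlib

namespace Planar

inductive PVar : Type
  | vx : PVar
  | vy : PVar
deriving DecidableEq

/-- A finite planar reduced rooted tree: every internal vertex has at least two
(ordered) children, encoded as `node t₁ t₂ rest` with children list `t₁ :: t₂ :: rest`;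
leaves are labeled by a variable (an isomorphism class of such a labeled tree is
faithfully represented by this inductive data). -/
inductive PTree : Type
  | leaf : PVar → PTree
  | node : PTree → PTree → List PTree → PTree

namespace PTree

/-- The number of leaves carrying the label `v`. -/
def countLeaf (v : PVar) : PTree → ℕ
  | .leaf w => if w = v then 1 else 0
  | .node t1 t2 rest =>
      countLeaf v t1 + countLeaf v t2 + (rest.attach.map fun t => countLeaf v t.1).sum
decreasing_by
  all_goals simp_wf
  · omega
  · omega
  · have := List.sizeOf_lt_of_mem t.2
    omega

end PTree

/-- `P'(x,y)`: planar monomials plus the empty tree `1_P` (= `none`). -/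
abbrev PT := Option PTree

/-- `deg_x`: the number of leaves labeled `x`. -/
def degx (S : PT) : ℕ := S.elim 0 (PTree.countLeaf .vx)

/-- `deg_y`: the number of leaves labeled `y`. -/
def degy (S : PT) : ℕ := S.elim 0 (PTree.countLeaf .vy)

/-- `m`-ary grafting `•_m` on `P'(x,y)` (`m = l.length`): join the non-trivial entries
at a new root; the conventions `•_m(1_P,…,1_P) = 1_P`, dropping of `1_P`-entries and
`•_2(S,1_P) = •_2(1_P,S) = S` amount to discarding the `1_P`-entries first. -/
def graft (l : List PT) : PT :=
  match l.reduceOption with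
  | [] => none
  | [t] => some t
  | t1 :: t2 :: ts => some (.node t1 t2 ts)

variable (K : Type) [Field K]

/-- The algebra `K{{x,y}` of planar power series in `x` and polynomials in `y`:
functions on `P'(x,y)` such that for every `n` only finitely many monomials of
`x`-degree `n` have a nonzero coefficient. -/
def PSer : Type := {f : PT → K // ∀ n : ℕ, {S : PT | f S ≠ 0 ∧ degx S = n}.Finite}

variable {K}

namespace PSer

private lemma finite_add (f g : PSer K) (n : ℕ) :
    {S : PT | f.1 S + g.1 S ≠ 0 ∧ degx S = n}.Finite := by
  apply ((f.2 n).union (g.2 n)).subset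
  rintro S ⟨hne, hdeg⟩
  by_cases h1 : f.1 S = 0
  · exact Or.inr ⟨by simpa [h1] using hne, hdeg⟩
  · exact Or.inl ⟨h1, hdeg⟩

private lemma finite_neg (f : PSer K) (n : ℕ) :
    {S : PT | -f.1 S ≠ 0 ∧ degx S = n}.Finite := by
  apply (f.2 n).subset
  rintro S ⟨hne, hdeg⟩
  exact ⟨by simpa using hne, hdeg⟩

private lemma finite_zero (n : ℕ) :
    {S : PT | (0 : K) ≠ 0 ∧ degx S = n}.Finite := by
  convert Set.finite_empty using 1
  ext S; simp

private lemma finite_smul (a : K) (f : PSer K) (n : ℕ) :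
    {S : PT | a * f.1 S ≠ 0 ∧ degx S = n}.Finite := by
  apply (f.2 n).subset
  rintro S ⟨hne, hdeg⟩
  exact ⟨fun h => hne (by simp [h]), hdeg⟩

noncomputable instance : AddCommGroup (PSer K) where
  add f g := ⟨fun S => f.1 S + g.1 S, finite_add f g⟩
  zero := ⟨fun _ => 0, finite_zero⟩
  neg f := ⟨fun S => -f.1 S, finite_neg f⟩
  add_assoc f g h := Subtype.ext (funext fun S => add_assoc _ _ _)
  add_comm f g := Subtype.ext (funext fun S => add_comm _ _)
  zero_add f := Subtype.ext (funext fun S => zero_add _)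
  add_zero f := Subtype.ext (funext fun S => add_zero _)
  neg_add_cancel f := Subtype.ext (funext fun S => neg_add_cancel _)
  nsmul n f := ⟨fun S => (n : K) * f.1 S, finite_smul _ f⟩
  nsmul_zero f := Subtype.ext (funext fun S => by
    show ((0 : ℕ) : K) * f.1 S = (0 : K); simp)
  nsmul_succ n f := Subtype.ext (funext fun S => by
    show ((n + 1 : ℕ) : K) * f.1 S = (n : K) * f.1 S + f.1 S; push_cast; ring)
  zsmul n f := ⟨fun S => (n : K) * f.1 S, finite_smul _ f⟩
  zsmul_zero' f := Subtype.ext (funext fun S => by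
    show ((0 : ℤ) : K) * f.1 S = (0 : K); simp)
  zsmul_succ' n f := Subtype.ext (funext fun S => by
    show ((Int.ofNat n.succ : ℤ) : K) * f.1 S = ((Int.ofNat n : ℤ) : K) * f.1 S + f.1 S
    simp only [Int.ofNat_eq_coe]; push_cast; ring)
  zsmul_neg' n f := Subtype.ext (funext fun S => by
    show ((Int.negSucc n : ℤ) : K) * f.1 S = -(((n.succ : ℤ) : K) * f.1 S)
    simp [Int.negSucc_eq]; push_cast; ring)

noncomputable instance : Module K (PSer K) where
  smul a f := ⟨fun S => a * f.1 S, finite_smul a f⟩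
  one_smul f := Subtype.ext (funext fun S => one_mul _)
  mul_smul a b f := Subtype.ext (funext fun S => mul_assoc _ _ _)
  smul_zero a := Subtype.ext (funext fun S => mul_zero _)
  smul_add a f g := Subtype.ext (funext fun S => mul_add _ _ _)
  add_smul a b f := Subtype.ext (funext fun S => add_mul _ _ _)
  zero_smul f := Subtype.ext (funext fun S => zero_mul _)

@[simp] lemma add_coeff (f g : PSer K) (S : PT) : (f + g).1 S = f.1 S + g.1 S := rfl
@[simp] lemma smul_coeff (a : K) (f : PSer K) (S : PT) : (a • f).1 S = a * f.1 S := rfl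
@[simp] lemma zero_coeff (S : PT) : (0 : PSer K).1 S = 0 := rfl

end PSer

open PSer

/-- The indicator series of a single planar monomial `S ∈ P'(x,y)`. -/
noncomputable def mono (S : PT) : PSer K := by
  classical
  refine ⟨fun T => if T = S then 1 else 0, fun n => (Set.finite_singleton S).subset ?_⟩
  rintro T ⟨h1, -⟩
  by_contra hc
  exact h1 (if_neg (by simpa [Set.mem_singleton_iff] using hc))

/-- The unit series `1_P` (the empty tree). -/
noncomputable def onePS : PSer K := mono none

/-- The series `x` (the one-vertex tree labeled `x`). -/
noncomputable def Xps : PSer K := mono (some (.leaf .vx))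

/-- The series `y = dx` (the one-vertex tree labeled `y`). -/
noncomputable def Yps : PSer K := mono (some (.leaf .vy))

/-- Coefficient of the product `•_m(f₁,…,f_m)` at `S`: the (finite) sum of
`c_{S₁}(f₁)⋯c_{S_m}(f_m)` over all decompositions `S = •_m(S₁,…,S_m)`. -/
noncomputable def bulletCoeff (fs : List (PSer K)) (S : PT) : K :=
  ∑ᶠ t ∈ {t : List PT | t.length = fs.length ∧ graft t = S},
    (List.zipWith (fun f u => f.1 u) fs t).prod

open Classical in
/-- The `m`-ary product `•_m(f₁,…,f_m)` on `K{{x,y}` (`m = fs.length`). -/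
noncomputable def bullet (fs : List (PSer K)) : PSer K :=
  if h : ∀ n : ℕ, {S : PT | bulletCoeff fs S ≠ 0 ∧ degx S = n}.Finite
  then ⟨bulletCoeff fs, h⟩ else 0

/-- The `x`-order `ord_x(f) ∈ ℕ ∪ {∞}`: the least `x`-degree of a monomial with
nonzero coefficient (`∞` for `f = 0`). -/
noncomputable def ordx (f : PSer K) : ℕ∞ :=
  ⨅ S ∈ {S : PT | f.1 S ≠ 0}, (degx S : ℕ∞)

/-- The `x`-adic absolute value `|f|ₓ = (1/2)^{ord_x f}` (`= 0` for `f = 0`). -/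
noncomputable def normx (f : PSer K) : ℝ :=
  if ordx f = ⊤ then 0 else (2⁻¹ : ℝ) ^ (ordx f).toNat

/-- The `x`-adic distance `|f - g|ₓ`. -/
noncomputable def distx (f g : PSer K) : ℝ := normx (f - g)

/-- A Cauchy sequence for the `x`-adic distance. -/
def IsCauchySeq (u : ℕ → PSer K) : Prop :=
  ∀ ε : ℝ, 0 < ε → ∃ N : ℕ, ∀ p q : ℕ, N ≤ p → N ≤ q → distx (u p) (u q) < ε

/-- Convergence of a sequence to `f` for the `x`-adic distance. -/
def TendstoSeq (u : ℕ → PSer K) (f : PSer K) : Prop :=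
  ∀ ε : ℝ, 0 < ε → ∃ N : ℕ, ∀ p : ℕ, N ≤ p → distx (u p) f < ε

/-- Continuity of a map between two spaces equipped with distance functions. -/
def ContWrt {α β : Type*} (dα : α → α → ℝ) (dβ : β → β → ℝ) (φ : α → β) : Prop :=
  ∀ a : α, ∀ ε : ℝ, 0 < ε → ∃ δ : ℝ, 0 < δ ∧ ∀ b : α, dα b a < δ → dβ (φ b) (φ a) < ε

/-- The property of being supported on monomials all of whose leaves are labeled `x`. -/
def OnlyX (f : PSer K) : Prop := ∀ S : PT, f.1 S ≠ 0 → degy S = 0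

variable (K) in
/-- `K{{x}}`, the closed unital subalgebra of `K{{x,y}` generated by `x`, as a
submodule: the series supported on `1_P` and trees all of whose leaves are labeled `x`. -/
noncomputable def kxSub : Submodule K (PSer K) where
  carrier := {f | OnlyX f}
  add_mem' := by
    intro f g hf hg S hS
    by_cases h1 : f.1 S = 0
    · exact hg S (by simpa [h1] using hS)
    · exact hf S h1
  zero_mem' := by intro S hS; simp at hS
  smul_mem' := by
    intro a f hf S hS
    exact hf S (fun h => hS (by simp [h]))

variable (K) in
/-- The space `K{{x}}` of planar power series in `x`. -/
abbrev Kx : Type _ := ↥(kxSub K)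

@[simp] lemma mem_kxSub {f : PSer K} : f ∈ kxSub K ↔ OnlyX f := Iff.rfl

/-- The `x`-adic distance on `K{{x}}`. -/
noncomputable def distKx (f g : Kx K) : ℝ := distx f.1 g.1

lemma onePS_mem_kxSub : onePS ∈ kxSub (K := K) := by
  intro S hS
  by_cases h : S = none
  · subst h; rfl
  · exact absurd (if_neg h) hS

lemma Xps_mem_kxSub : Xps ∈ kxSub (K := K) := by
  intro S hS
  by_cases h : S = some (.leaf .vx)
  · subst h; simp [degy, PTree.countLeaf]
  · exact absurd (if_neg h) hS

/-- `1_P` as an element of `K{{x}}`. -/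
noncomputable def oneX : Kx K := ⟨onePS, onePS_mem_kxSub⟩

/-- `x` as an element of `K{{x}}`. -/
noncomputable def xX : Kx K := ⟨Xps, Xps_mem_kxSub⟩

open Classical in
/-- The `m`-ary product `•_m` on `K{{x}}` (`m = fs.length`). -/
noncomputable def bulletX (fs : List (Kx K)) : Kx K :=
  if h : bullet (fs.map (fun f => f.1)) ∈ kxSub K
  then ⟨bullet (fs.map (fun f => f.1)), h⟩ else 0

open Classical in
/-- The homogeneous component of degree `n` (w.r.t. `deg_x`) of a planar power series. -/
noncomputable def comp (f : PSer K) (n : ℕ) : PSer K :=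
  ⟨fun S => if degx S = n then f.1 S else 0, by
    intro m
    apply (f.2 m).subset
    rintro S ⟨h1, h2⟩
    refine ⟨?_, h2⟩
    by_cases hd : degx S = n
    · simpa [hd] using h1
    · simp [hd] at h1⟩

/-- The homogeneous component of degree `n` of an element of `K{{x}}`. -/
noncomputable def compX (f : Kx K) (n : ℕ) : Kx K :=
  ⟨comp f.1 n, by
    intro S hS
    apply (mem_kxSub.mp f.2) S
    simp only [comp] at hS
    by_cases hd : degx S = n
    · simpa [hd] using hS
    · simp [hd] at hS⟩

/-- A substitution homomorphism `φ_{(g,h)} : K{{x,y} → K{{x,y}`: `K`-linear, compatible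
with all grafting operations `•_m` (`m ≥ 2`), unital, `x ↦ g`, `y ↦ h`, and continuous
for the `x`-adic topology. -/
structure IsSubstHom (g h : PSer K) (φ : PSer K → PSer K) : Prop where
  linear : IsLinearMap K φ
  map_graft : ∀ fs : List (PSer K), 2 ≤ fs.length → φ (bullet fs) = bullet (fs.map φ)
  map_one : φ onePS = onePS
  map_X : φ Xps = g
  map_Y : φ Yps = h
  cont : ContWrt distx distx φ

/-- A substitution homomorphism `φ_g : K{{x}} → K{{x}}` with `x ↦ g`. -/
structure IsSubstHomX (g : Kx K) (φ : Kx K → Kx K) : Prop where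
  linear : IsLinearMap K φ
  map_graft : ∀ fs : List (Kx K), 2 ≤ fs.length → φ (bulletX fs) = bulletX (fs.map φ)
  map_one : φ oneX = oneX
  map_X : φ xX = g
  cont : ContWrt distKx distKx φ

/-- The universal derivation `d : K{{x}} → K{{x,y}`: continuous, `K`-linear, `d x = y`,
and satisfying the Leibniz rule for every grafting operation `•_m` (`m ≥ 2`). -/
structure IsUDeriv (d : Kx K → PSer K) : Prop where
  linear : IsLinearMap K d
  cont : ContWrt distKx distx d
  map_X : d xX = Yps
  leibniz : ∀ fs : List (Kx K), 2 ≤ fs.length →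
    d (bulletX fs) = ∑ i : Fin fs.length,
      bullet ((fs.map (fun f => f.1)).set i.1 (d (fs.get i)))

/-- The `k`-ary planar exponential series `Exp_k(x)`: constant coefficient `1`,
coefficient `1` at `x`, and `Exp_k(kx) = •_k(Exp_k(x),…,Exp_k(x))`. -/
structure IsExp (k : ℕ) (f : Kx K) : Prop where
  coeff_one : f.1.1 none = 1
  coeff_X : f.1.1 (some (.leaf .vx)) = 1
  funEq : ∀ φ : Kx K → Kx K, IsSubstHomX ((k : K) • xX) φ →
    φ f = bulletX (List.replicate k f)

/-- `ℓ = Log_k(1+x)`, the planar logarithm attached to a planar exponential series `e`: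
`ord_x ℓ ≥ 1` and `ℓ(e - 1) = x`. -/
structure IsLogOf (e ℓ : Kx K) : Prop where
  ord : 1 ≤ ordx ℓ.1
  eq : ∀ φ : Kx K → Kx K, IsSubstHomX (e - oneX) φ → φ ℓ = xX

end Planar

namespace Planar

variable {K : Type} [Field K]

open PSer

/-! ### Generic helpers -/

lemma finsum_mem_single' {α : Type*} {M : Type*} [AddCommMonoid M] {s : Set α} (f : α → M)
    (a : α) (ha : a ∈ s) (h : ∀ x ∈ s, x ≠ a → f x = 0) : ∑ᶠ x ∈ s, f x = f a := by
  classical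
  rw [finsum_mem_def, finsum_eq_single _ a]
  · exact Set.indicator_of_mem ha f
  · intro x hx
    by_cases hxs : x ∈ s
    · rw [Set.indicator_of_mem hxs]; exact h x hxs hx
    · exact Set.indicator_of_notMem hxs f

lemma finsum_mem_zero'' {α M : Type*} [AddCommMonoid M] {s : Set α} {f : α → M}
    (h : ∀ x ∈ s, f x = 0) : ∑ᶠ x ∈ s, f x = 0 :=
  finsum_mem_of_eqOn_zero (fun x hx => h x hx)

lemma sum_fin_congr {M : Type*} [AddCommMonoid M] {m n : ℕ} (h : m = n)
    (f : Fin m → M) (g : Fin n → M)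
    (hfg : ∀ (i : ℕ) (hi : i < m), f ⟨i, hi⟩ = g ⟨i, h ▸ hi⟩) :
    ∑ i, f i = ∑ i, g i := by
  subst h
  exact Finset.sum_congr rfl fun i _ => by simpa using hfg i.1 i.2

/-! ### Degrees -/

def degv (v : PVar) (S : PT) : ℕ := S.elim 0 (PTree.countLeaf v)

lemma degx_eq (S : PT) : degx S = degv .vx S := rfl
lemma degy_eq (S : PT) : degy S = degv .vy S := rfl

lemma countLeaf_node (v : PVar) (t1 t2 : PTree) (ts : List PTree) :
    PTree.countLeaf v (.node t1 t2 ts) =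
      PTree.countLeaf v t1 + PTree.countLeaf v t2 + (ts.map (PTree.countLeaf v)).sum := by
  rw [PTree.countLeaf]
  congr 1
  exact congrArg List.sum (List.attach_map_val (l := ts) (f := PTree.countLeaf v))

lemma sum_reduceOption (v : PVar) (l : List PT) :
    (l.reduceOption.map (PTree.countLeaf v)).sum = (l.map (degv v)).sum := by
  induction l with
  | nil => rfl
  | cons a l ih =>
    cases a with
    | none => simpa [List.reduceOption_cons_of_none, degv] using ih
    | some t => simp [List.reduceOption_cons_of_some, ih, degv]

lemma degv_graft (v : PVar) (l : List PT) : degv v (graft l) = (l.map (degv v)).sum := by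
  rw [← sum_reduceOption]
  rcases h : l.reduceOption with _ | ⟨t1, rest⟩
  · simp [graft, h, degv]
  · rcases rest with _ | ⟨t2, ts⟩
    · simp [graft, h, degv]
    · simp [graft, h, degv, countLeaf_node]; omega

/-! ### Monomials and bullet coefficients -/

open Classical in
lemma mono_coeff (S T : PT) : (mono (K := K) S).1 T = if T = S then 1 else 0 := rfl

lemma bulletCoeff_ne_zero {fs : List (PSer K)} {T : PT} (h : bulletCoeff fs T ≠ 0) :
    ∃ t : List PT, t.length = fs.length ∧ graft t = T ∧
      ∀ (i : ℕ) (hi : i < t.length) (hi' : i < fs.length), (fs[i]).1 (t[i]) ≠ 0 := by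
  simp only [bulletCoeff] at h
  obtain ⟨t, hts, hne⟩ : ∃ t ∈ {t : List PT | t.length = fs.length ∧ graft t = T},
      (List.zipWith (fun (f : PSer K) u => f.1 u) fs t).prod ≠ 0 := by
    by_contra hc
    push_neg at hc
    exact h (finsum_mem_zero'' hc)
  refine ⟨t, hts.1, hts.2, ?_⟩
  intro i hi hi' h0
  apply hne
  apply List.prod_eq_zero
  have hlen : i < (List.zipWith (fun (f : PSer K) u => f.1 u) fs t).length := by
    rw [List.length_zipWith]; exact lt_min hi' hi
  have he : (List.zipWith (fun (f : PSer K) u => f.1 u) fs t)[i] = 0 := by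
    rw [List.getElem_zipWith]; exact h0
  have hm := List.getElem_mem hlen
  rwa [he] at hm

lemma bullet_finite (fs : List (PSer K)) (n : ℕ) :
    {S : PT | bulletCoeff fs S ≠ 0 ∧ degx S = n}.Finite := by
  classical
  set A : Set PT :=
    ⋃ f ∈ {f : PSer K | f ∈ fs}, ⋃ k ∈ Set.Iic n, {S : PT | f.1 S ≠ 0 ∧ degx S = k} with hAdef
  have hA : A.Finite :=
    (List.finite_toSet fs).biUnion fun f _ => (Set.finite_Iic n).biUnion fun k _ => f.2 k
  have : Finite ↥A := hA.to_subtype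
  have hL : {t : List PT | t.length = fs.length ∧ ∀ x ∈ t, x ∈ A}.Finite := by
    apply ((List.finite_length_eq (↥A) fs.length).image (List.map Subtype.val)).subset
    rintro t ⟨hlen, hmem⟩
    refine ⟨t.attach.map (fun x => ⟨x.1, hmem x.1 x.2⟩), by simp [hlen], ?_⟩
    rw [List.map_map]
    exact (List.attach_map_val (l := t) (f := fun x : PT => x)).trans (List.map_id t)
  apply (hL.image graft).subset
  rintro T ⟨hne, hdeg⟩
  obtain ⟨t, hlen, hgr, hc⟩ := bulletCoeff_ne_zero hne
  refine ⟨t, ⟨hlen, ?_⟩, hgr⟩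
  intro x hx
  obtain ⟨i, hi, rfl⟩ := List.mem_iff_getElem.mp hx
  have hi' : i < fs.length := hlen ▸ hi
  have hxd : degx t[i] ≤ n := by
    have h1 : degx T = (t.map (degv .vx)).sum := by
      rw [← hgr, degx_eq, degv_graft]
    have h2 : degv .vx t[i] ∈ t.map (degv .vx) := by
      have : (t.map (degv .vx))[i]'(by simpa using hi) = degv .vx t[i] := List.getElem_map _
      rw [← this]
      exact List.getElem_mem _
    have := List.le_sum_of_mem h2
    rw [← h1, hdeg] at this
    exact this
  exact Set.mem_biUnion (show fs[i] ∈ {f : PSer K | f ∈ fs} from List.getElem_mem hi')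
    (Set.mem_biUnion (show degx t[i] ∈ Set.Iic n from hxd) ⟨hc i hi hi', rfl⟩)

lemma bullet_coe (fs : List (PSer K)) : (bullet fs).1 = bulletCoeff fs := by
  rw [show bullet fs = ⟨bulletCoeff fs, bullet_finite fs⟩ from dif_pos (bullet_finite fs)]

lemma bullet_onlyX {fs : List (PSer K)} (h : ∀ f ∈ fs, OnlyX f) : OnlyX (bullet fs) := by
  intro T hT
  rw [bullet_coe] at hT
  obtain ⟨t, hlen, hgr, hc⟩ := bulletCoeff_ne_zero hT
  rw [← hgr, degy_eq, degv_graft]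
  apply List.sum_eq_zero
  intro x hx
  simp only [List.mem_map] at hx
  obtain ⟨u, hu, rfl⟩ := hx
  obtain ⟨i, hi, rfl⟩ := List.mem_iff_getElem.mp hu
  exact h fs[i] (List.getElem_mem _) t[i] (hc i hi (hlen ▸ hi))

lemma bulletX_coe (fs : List (Kx K)) : (bulletX fs).1 = bullet (fs.map (fun f => f.1)) := by
  simp only [bulletX]
  rw [dif_pos]
  apply bullet_onlyX
  intro f hf
  simp only [List.mem_map] at hf
  obtain ⟨u, _, rfl⟩ := hf
  exact u.2

open Classical in
lemma zip_mono_prod (l t : List PT) (h : t.length = l.length) :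
    (List.zipWith (fun (f : PSer K) u => f.1 u) (l.map mono) t).prod
      = if t = l then 1 else 0 := by
  induction l generalizing t with
  | nil =>
    rw [List.length_eq_zero_iff.mp h]
    simp
  | cons a l ih =>
    cases t with
    | nil => simp at h
    | cons b t =>
      simp only [List.map_cons, List.zipWith_cons_cons, List.prod_cons]
      rw [ih t (by simpa using h), mono_coeff]
      by_cases hb : b = a <;> by_cases ht : t = l <;> simp [hb, ht]

lemma graft_map_mono (l : List PT) : bullet (l.map (mono (K := K))) = mono (graft l) := by
  apply Subtype.ext; funext T
  rw [bullet_coe, mono_coeff]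
  simp only [bulletCoeff]
  by_cases hT : graft l = T
  · rw [if_pos hT.symm]
    have hmem : l ∈ {t : List PT | t.length = (List.map (mono (K := K)) l).length ∧ graft t = T} :=
      ⟨by simp, hT⟩
    rw [finsum_mem_single' _ l hmem]
    · rw [zip_mono_prod l l rfl, if_pos rfl]
    · intro x hx hxl
      rw [zip_mono_prod l x (by simpa using hx.1), if_neg hxl]
  · rw [if_neg (fun hh => hT hh.symm)]
    apply finsum_mem_zero''
    intro x hx
    rw [zip_mono_prod l x (by simpa using hx.1), if_neg]
    intro hxl
    exact hT (hxl ▸ hx.2)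

lemma mono_onlyX {S : PT} (hS : degy S = 0) : OnlyX (mono (K := K) S) := by
  intro T hT
  have hTS : T = S := by
    by_contra hc
    exact hT (by rw [mono_coeff, if_neg hc])
  rwa [hTS]

noncomputable def monoX (S : PT) (hS : degy S = 0) : Kx K := ⟨mono S, mono_onlyX hS⟩

lemma monoX_coe (S : PT) (hS : degy S = 0) : (monoX (K := K) S hS).1 = mono S := rfl

lemma graft_pair_none_right (T : PT) : graft [T, none] = T := by cases T <;> rfl
lemma graft_pair_none_left (T : PT) : graft [none, T] = T := by cases T <;> rfl

lemma bullet_pair_right (u : PSer K) : bullet [u, onePS] = u := by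
  apply Subtype.ext; funext T
  rw [bullet_coe]
  simp only [bulletCoeff]
  have hmem : [T, none] ∈ {t : List PT |
      t.length = ([u, onePS] : List (PSer K)).length ∧ graft t = T} :=
    ⟨rfl, graft_pair_none_right T⟩
  rw [finsum_mem_single' _ [T, none] hmem]
  · show u.1 T * ((mono (K := K) none).1 none * 1) = u.1 T
    rw [mono_coeff, if_pos rfl]; ring
  · rintro x ⟨hxl, hxg⟩ hxne
    obtain ⟨a, b, rfl⟩ := List.length_eq_two.mp hxl
    show u.1 a * ((mono (K := K) none).1 b * 1) = 0
    by_cases hb : b = none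
    · subst hb
      exact absurd (by rw [graft_pair_none_right] at hxg; rw [hxg]) hxne
    · rw [mono_coeff, if_neg hb]; ring

lemma bullet_pair_left (u : PSer K) : bullet [onePS, u] = u := by
  apply Subtype.ext; funext T
  rw [bullet_coe]
  simp only [bulletCoeff]
  have hmem : [none, T] ∈ {t : List PT |
      t.length = ([onePS, u] : List (PSer K)).length ∧ graft t = T} :=
    ⟨rfl, graft_pair_none_left T⟩
  rw [finsum_mem_single' _ [none, T] hmem]
  · show (mono (K := K) none).1 none * (u.1 T * 1) = u.1 T
    rw [mono_coeff, if_pos rfl]; ring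
  · rintro x ⟨hxl, hxg⟩ hxne
    obtain ⟨a, b, rfl⟩ := List.length_eq_two.mp hxl
    show (mono (K := K) none).1 a * (u.1 b * 1) = 0
    by_cases ha : a = none
    · subst ha
      exact absurd (by rw [graft_pair_none_left] at hxg; rw [hxg]) hxne
    · rw [mono_coeff, if_neg ha]; ring

/-! ### ordx / normx / distx -/

lemma ordx_le_degx {f : PSer K} {S : PT} (h : f.1 S ≠ 0) : ordx f ≤ (degx S : ℕ∞) :=
  iInf₂_le S h

lemma le_ordx {f : PSer K} {k : ℕ∞} (h : ∀ S, f.1 S ≠ 0 → k ≤ degx S) : k ≤ ordx f :=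
  le_iInf₂ h

lemma ordx_ne_top {f : PSer K} (h : f ≠ 0) : ordx f ≠ ⊤ := by
  obtain ⟨S, hS⟩ : ∃ S, f.1 S ≠ 0 := by
    by_contra hc
    push_neg at hc
    exact h (Subtype.ext (funext hc))
  intro htop
  have := ordx_le_degx hS
  rw [htop, top_le_iff] at this
  exact (ENat.coe_ne_top _) this

lemma normx_nonneg (f : PSer K) : 0 ≤ normx f := by
  rw [normx]; split
  · exact le_refl 0
  · positivity

lemma normx_pos {f : PSer K} (h : f ≠ 0) : 0 < normx f := by
  rw [normx, if_neg (ordx_ne_top h)]; positivity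

lemma normx_le_of_le {f g : PSer K} (h : ordx g ≤ ordx f) : normx f ≤ normx g := by
  rw [normx, normx]
  by_cases hf : ordx f = ⊤
  · rw [if_pos hf]
    split
    · exact le_refl 0
    · positivity
  · rw [if_neg hf, if_neg (fun hg : ordx g = ⊤ => hf (top_le_iff.mp (hg ▸ h)))]
    exact pow_le_pow_of_le_one (by norm_num) (by norm_num) (ENat.toNat_le_toNat h hf)

lemma normx_le_pow {f : PSer K} {k : ℕ} (h : (k : ℕ∞) ≤ ordx f) : normx f ≤ (2⁻¹ : ℝ) ^ k := by
  rw [normx]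
  split_ifs with h1
  · positivity
  · apply pow_le_pow_of_le_one (by norm_num) (by norm_num)
    have := ENat.toNat_le_toNat h h1
    simpa using this

lemma min_ordx_le_add (f g : PSer K) : min (ordx f) (ordx g) ≤ ordx (f + g) := by
  apply le_ordx
  intro S hS
  have hfg : f.1 S ≠ 0 ∨ g.1 S ≠ 0 := by
    by_contra hc
    push_neg at hc
    rw [add_coeff, hc.1, hc.2, add_zero] at hS
    exact hS rfl
  rcases hfg with h | h
  · exact le_trans (min_le_left _ _) (ordx_le_degx h)
  · exact le_trans (min_le_right _ _) (ordx_le_degx h)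

lemma normx_add_le (f g : PSer K) : normx (f + g) ≤ max (normx f) (normx g) := by
  rcases le_total (ordx f) (ordx g) with h | h
  · have h1 := min_ordx_le_add f g
    rw [min_eq_left h] at h1
    exact le_trans (normx_le_of_le h1) (le_max_left _ _)
  · have h1 := min_ordx_le_add f g
    rw [min_eq_right h] at h1
    exact le_trans (normx_le_of_le h1) (le_max_right _ _)

lemma normx_neg (f : PSer K) : normx (-f) = normx f := by
  have hset : {S : PT | (-f).1 S ≠ 0} = {S : PT | f.1 S ≠ 0} := by
    ext S
    simp [show (-f).1 S = -(f.1 S) from rfl]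
  rw [normx, normx, ordx, ordx, hset]

lemma distx_comm (f g : PSer K) : distx f g = distx g f := by
  rw [distx, distx, ← neg_sub g f, normx_neg]

lemma distx_tri (a b c : PSer K) : distx a b ≤ max (distx a c) (distx c b) := by
  have h : a - b = (a - c) + (c - b) := by abel
  rw [distx, h]
  exact normx_add_le _ _

lemma eq_of_distx_small {a b : PSer K} (h : ∀ ε : ℝ, 0 < ε → distx a b < ε) : a = b := by
  by_contra hc
  exact lt_irrefl _ (h _ (normx_pos (sub_ne_zero.mpr hc)))

/-! ### Truncation -/

open Classical in
noncomputable def trunc (f : PSer K) (n : ℕ) : PSer K :=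
  ⟨fun S => if degx S ≤ n then f.1 S else 0, by
    intro m
    apply (f.2 m).subset
    rintro S ⟨h1, h2⟩
    refine ⟨?_, h2⟩
    intro h0
    apply h1
    simp [h0]⟩

open Classical in
lemma trunc_coeff (f : PSer K) (n : ℕ) (S : PT) :
    (trunc f n).1 S = if degx S ≤ n then f.1 S else 0 := rfl

lemma trunc_onlyX {f : PSer K} (hf : OnlyX f) (n : ℕ) : OnlyX (trunc f n) := by
  intro S hS
  apply hf S
  intro h0
  apply hS
  rw [trunc_coeff, h0, ite_self]

noncomputable def truncX (f : Kx K) (n : ℕ) : Kx K := ⟨trunc f.1 n, trunc_onlyX f.2 n⟩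

lemma Efin (f : PSer K) (n : ℕ) : {S : PT | f.1 S ≠ 0 ∧ degx S ≤ n}.Finite := by
  apply ((Set.finite_Iic n).biUnion fun k (_ : k ∈ Set.Iic n) => f.2 k).subset
  rintro S ⟨h1, h2⟩
  exact Set.mem_biUnion (show degx S ∈ Set.Iic n from h2) ⟨h1, rfl⟩

lemma ordx_sub_trunc (f : PSer K) (n : ℕ) : ((n + 1 : ℕ) : ℕ∞) ≤ ordx (f - trunc f n) := by
  apply le_ordx
  intro S hS
  have hcoeff : (f - trunc f n).1 S = f.1 S + -((trunc f n).1 S) := rfl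
  by_cases hd : degx S ≤ n
  · exfalso
    apply hS
    rw [hcoeff, trunc_coeff, if_pos hd, add_neg_cancel]
  · exact_mod_cast Nat.succ_le_of_lt (lt_of_not_ge hd)

lemma truncX_tendsto (f : Kx K) : ∀ ε : ℝ, 0 < ε → ∃ N : ℕ, ∀ n, N ≤ n →
    distKx (truncX f n) f < ε := by
  intro ε hε
  obtain ⟨N, hN⟩ := exists_pow_lt_of_lt_one hε (by norm_num : (2⁻¹ : ℝ) < 1)
  refine ⟨N, fun n hn => ?_⟩
  have h1 : distKx (truncX f n) f = normx (f.1 - trunc f.1 n) := by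
    rw [distKx, distx, ← neg_sub f.1, normx_neg]
    rfl
  rw [h1]
  calc normx (f.1 - trunc f.1 n) ≤ (2⁻¹ : ℝ) ^ (n + 1) := normx_le_pow (ordx_sub_trunc f.1 n)
    _ ≤ (2⁻¹ : ℝ) ^ N := pow_le_pow_of_le_one (by norm_num) (by norm_num) (by omega)
    _ < ε := hN

/-! ### Sums of coefficients -/

noncomputable def coeffL (T : PT) : PSer K →ₗ[K] K where
  toFun f := f.1 T
  map_add' f g := rfl
  map_smul' a f := rfl

lemma sum_coeff {ι : Type*} (s : Finset ι) (g : ι → PSer K) (T : PT) :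
    (∑ i ∈ s, g i).1 T = ∑ i ∈ s, (g i).1 T :=
  map_sum (coeffL T) g s

lemma sumKx_coe {ι : Type*} (s : Finset ι) (g : ι → Kx K) :
    (∑ i ∈ s, g i).1 = ∑ i ∈ s, (g i).1 :=
  map_sum ((kxSub K).subtype) g s

/-! ### The extension lemma -/

lemma ext_of_monoX {F G : Kx K → PSer K} (hF : IsLinearMap K F) (hG : IsLinearMap K G)
    (hFc : ContWrt distKx distx F) (hGc : ContWrt distKx distx G)
    (h : ∀ (S : PT) (hS : degy S = 0), F (monoX S hS) = G (monoX S hS)) (f : Kx K) :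
    F f = G f := by
  classical
  have hdeg : ∀ n : ℕ, ∀ S ∈ (Efin f.1 n).toFinset, degy S = 0 := fun n S hS =>
    f.2 S ((Set.Finite.mem_toFinset _).mp hS).1
  have repr : ∀ n : ℕ, truncX f n = ∑ S ∈ (Efin f.1 n).toFinset.attach,
      f.1.1 S.1 • monoX S.1 (hdeg n S.1 S.2) := by
    intro n
    apply Subtype.ext
    rw [sumKx_coe]
    apply Subtype.ext
    funext T
    rw [show ((∑ S ∈ (Efin f.1 n).toFinset.attach,
        ((f.1.1 S.1 • monoX S.1 (hdeg n S.1 S.2) : Kx K) : PSer K)) : PSer K).1 T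
      = ∑ S ∈ (Efin f.1 n).toFinset.attach,
        ((f.1.1 S.1 • monoX S.1 (hdeg n S.1 S.2) : Kx K) : PSer K).1 T from
      sum_coeff _ _ T]
    have hterm : ∀ S : {x // x ∈ (Efin f.1 n).toFinset},
        ((f.1.1 S.1 • monoX S.1 (hdeg n S.1 S.2) : Kx K) : PSer K).1 T
          = if T = S.1 then f.1.1 S.1 else 0 := by
      intro S
      show f.1.1 S.1 * (mono S.1 : PSer K).1 T = _
      rw [mono_coeff]
      by_cases hTS : T = S.1 <;> simp [hTS]
    rw [Finset.sum_congr rfl (fun S _ => hterm S)]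
    rw [show (∑ S ∈ (Efin f.1 n).toFinset.attach, if T = S.1 then f.1.1 S.1 else 0)
        = ∑ S ∈ (Efin f.1 n).toFinset, if T = S then f.1.1 S else 0 from
      Finset.sum_attach _ (fun S => if T = S then f.1.1 S else 0)]
    rw [Finset.sum_ite_eq]
    show (trunc f.1 n).1 T = _
    rw [trunc_coeff]
    by_cases hd : degx T ≤ n
    · rw [if_pos hd]
      by_cases hz : f.1.1 T = 0
      · rw [hz]
        split <;> rfl
      · rw [if_pos (by rw [Set.Finite.mem_toFinset]; exact ⟨hz, hd⟩)]
    · rw [if_neg hd, if_neg]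
      rw [Set.Finite.mem_toFinset]
      rintro ⟨-, hd'⟩
      exact hd hd'
  have key : ∀ n : ℕ, F (truncX f n) = G (truncX f n) := by
    intro n
    rw [repr n]
    have hFs : F (∑ S ∈ (Efin f.1 n).toFinset.attach, f.1.1 S.1 • monoX S.1 (hdeg n S.1 S.2))
        = ∑ S ∈ (Efin f.1 n).toFinset.attach, f.1.1 S.1 • F (monoX S.1 (hdeg n S.1 S.2)) := by
      show (hF.mk' F) _ = _
      rw [map_sum]
      exact Finset.sum_congr rfl fun S _ => (hF.mk' F).map_smul _ _
    have hGs : G (∑ S ∈ (Efin f.1 n).toFinset.attach, f.1.1 S.1 • monoX S.1 (hdeg n S.1 S.2))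
        = ∑ S ∈ (Efin f.1 n).toFinset.attach, f.1.1 S.1 • G (monoX S.1 (hdeg n S.1 S.2)) := by
      show (hG.mk' G) _ = _
      rw [map_sum]
      exact Finset.sum_congr rfl fun S _ => (hG.mk' G).map_smul _ _
    rw [hFs, hGs]
    exact Finset.sum_congr rfl fun S _ => by rw [h S.1 (hdeg n S.1 S.2)]
  apply eq_of_distx_small
  intro ε hε
  obtain ⟨δF, hδF, hFd⟩ := hFc f ε hε
  obtain ⟨δG, hδG, hGd⟩ := hGc f ε hε
  obtain ⟨N, hN⟩ := truncX_tendsto f (min δF δG) (lt_min hδF hδG)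
  have h1 : distx (F (truncX f N)) (F f) < ε :=
    hFd _ (lt_of_lt_of_le (hN N le_rfl) (min_le_left _ _))
  have h2 : distx (G (truncX f N)) (G f) < ε :=
    hGd _ (lt_of_lt_of_le (hN N le_rfl) (min_le_right _ _))
  calc distx (F f) (G f)
      ≤ max (distx (F f) (F (truncX f N))) (distx (F (truncX f N)) (G f)) := distx_tri _ _ _
    _ < ε := by
        apply max_lt
        · rw [distx_comm]; exact h1
        · rw [key N]; exact h2

/-! ### Grafting children -/

lemma reduceOption_map_some (l : List PTree) :
    (l.map (some : PTree → PT)).reduceOption = l := by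
  induction l with
  | nil => rfl
  | cons a l ih => rw [List.map_cons, List.reduceOption_cons_of_some, ih]

lemma graft_children (t1 t2 : PTree) (rest : List PTree) :
    graft (some t1 :: some t2 :: rest.map some) = some (.node t1 t2 rest) := by
  have h : (some t1 :: some t2 :: rest.map some : List PT).reduceOption
      = t1 :: t2 :: rest := by
    rw [List.reduceOption_cons_of_some, List.reduceOption_cons_of_some,
      reduceOption_map_some]
  simp [graft, h]

lemma degy_children {t1 t2 : PTree} {rest : List PTree}
    (hS : degy (some (PTree.node t1 t2 rest)) = 0) :
    ∀ x ∈ (some t1 :: some t2 :: rest.map some : List PT), degy x = 0 := by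
  intro x hx
  have hgr := graft_children t1 t2 rest
  rw [← hgr, degy_eq, degv_graft] at hS
  have hx' : degv .vy x ∈ ((some t1 :: some t2 :: rest.map some : List PT).map (degv .vy)) :=
    List.mem_map_of_mem hx
  exact List.all_zero_of_le_zero_le_of_sum_eq_zero (fun y _ => Nat.zero_le y) hS hx'

noncomputable def ptSize (S : PT) : ℕ := S.elim 0 sizeOf

lemma size_lt_children {t1 t2 : PTree} {rest : List PTree} {x : PT}
    (hx : x ∈ (some t1 :: some t2 :: rest.map some : List PT)) :
    ptSize x < sizeOf (PTree.node t1 t2 rest) := by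
  simp only [List.mem_cons, List.mem_map] at hx
  have hs : sizeOf (PTree.node t1 t2 rest) = 1 + sizeOf t1 + sizeOf t2 + sizeOf rest := by
    simp
  rcases hx with rfl | rfl | ⟨a, ha, rfl⟩
  · show sizeOf t1 < _
    omega
  · show sizeOf t2 < _
    omega
  · show sizeOf a < _
    have := List.sizeOf_lt_of_mem ha
    omega

/-! ### d(1) = 0 -/

lemma d_one {d : Kx K → PSer K} (hd : IsUDeriv d) : d oneX = 0 := by
  have h1 : bulletX [oneX, oneX] = (oneX : Kx K) := by
    apply Subtype.ext
    rw [bulletX_coe]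
    show bullet [onePS, onePS] = onePS
    have h2 : ([onePS, onePS] : List (PSer K)) = ([none, none] : List PT).map mono := rfl
    rw [h2, graft_map_mono]
    rfl
  have h2 := hd.leibniz [oneX, oneX] (by simp)
  rw [h1] at h2
  simp only [List.length_cons, List.length_nil, Fin.sum_univ_succ, Finset.univ_eq_empty,
    Finset.sum_empty, add_zero, Fin.val_zero, Fin.val_succ, List.map_cons, List.map_nil,
    List.get_eq_getElem] at h2
  have h3 : d oneX = bullet [d oneX, onePS] + bullet [onePS, d oneX] := by
    convert h2 using 2 <;> rfl
  rw [bullet_pair_right, bullet_pair_left] at h3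
  have h4 : d oneX + 0 = d oneX + d oneX := by rw [add_zero, ← h3]
  exact (add_left_cancel h4).symm

/-! ### Substitution homomorphisms agree with `φ` on `K{{x}}` monomials -/

lemma dphi_mono {g : Kx K} {φ : Kx K → Kx K} (hφ : IsSubstHomX g φ)
    {dg : PSer K} {dφ : PSer K → PSer K} (hdφ : IsSubstHom g.1 dg dφ) :
    ∀ (S : PT) (hS : degy S = 0), dφ (mono S) = (φ (monoX S hS)).1 := by
  suffices H : ∀ (N : ℕ) (S : PT), ptSize S < N → ∀ (hS : degy S = 0),
      dφ (mono S) = (φ (monoX S hS)).1 by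
    intro S hS
    exact H (ptSize S + 1) S (by omega) hS
  intro N
  induction N with
  | zero => intro S h; omega
  | succ N IH =>
    rintro (_ | S) hlt hS
    · have h1 : (mono none : PSer K) = onePS := rfl
      have h2 : monoX (K := K) none hS = oneX := rfl
      rw [h1, h2, hdφ.map_one, hφ.map_one]
      rfl
    · cases S with
      | leaf v =>
        cases v with
        | vy => exact absurd hS (by simp [degy, PTree.countLeaf])
        | vx =>
          have h1 : (mono (some (.leaf .vx)) : PSer K) = Xps := rfl
          have h2 : monoX (K := K) (some (.leaf .vx)) hS = xX := rfl
          rw [h1, h2, hdφ.map_X, hφ.map_X]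
      | node t1 t2 rest =>
        set cs : List PT := some t1 :: some t2 :: rest.map some with hcs
        have hdy : ∀ x ∈ cs, degy x = 0 := degy_children hS
        have hszn : ptSize (some (PTree.node t1 t2 rest)) = sizeOf (PTree.node t1 t2 rest) := rfl
        rw [hszn] at hlt
        set ms : List (Kx K) := cs.attach.map (fun x => monoX x.1 (hdy x.1 x.2)) with hms
        have hmslen : ms.length = cs.length := by simp [hms]
        have hlen2 : 2 ≤ cs.length := by simp [hcs]
        have key0 : ms.map (fun f => f.1) = cs.map mono := by
          rw [hms, List.map_map]
          exact List.attach_map_val (l := cs) (f := fun x => mono x)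
        have hbx : bulletX ms = monoX (some (.node t1 t2 rest)) hS := by
          apply Subtype.ext
          rw [bulletX_coe, key0, graft_map_mono, graft_children]
          rfl
        have hmono : (mono (some (.node t1 t2 rest)) : PSer K) = bullet (cs.map mono) := by
          rw [graft_map_mono, graft_children]
        rw [hmono, hdφ.map_graft _ (by simpa using hlen2)]
        have key1 : (cs.map mono).map dφ = (ms.map φ).map (fun f => f.1) := by
          rw [List.map_map, List.map_map, hms, List.map_map]
          rw [← List.attach_map_val (l := cs) (f := dφ ∘ mono)]
          apply List.map_congr_left
          intro x _
          exact IH x.1 (lt_of_lt_of_le (size_lt_children x.2) (by omega)) (hdy x.1 x.2)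
        rw [key1, ← bulletX_coe, ← hφ.map_graft ms (by omega), hbx]

/-! ### The chain rule on monomials -/

lemma chain_mono {g : Kx K} {φ : Kx K → Kx K} (hφ : IsSubstHomX g φ)
    {d : Kx K → PSer K} (hd : IsUDeriv d)
    {dφ : PSer K → PSer K} (hdφ : IsSubstHom g.1 (d g) dφ)
    (hrestr : ∀ f : Kx K, dφ f.1 = (φ f).1) :
    ∀ (S : PT) (hS : degy S = 0), dφ (d (monoX S hS)) = d (φ (monoX S hS)) := by
  suffices H : ∀ (N : ℕ) (S : PT), ptSize S < N → ∀ (hS : degy S = 0),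
      dφ (d (monoX S hS)) = d (φ (monoX S hS)) by
    intro S hS
    exact H (ptSize S + 1) S (by omega) hS
  intro N
  induction N with
  | zero => intro S h; omega
  | succ N IH =>
    rintro (_ | S) hlt hS
    · rw [show monoX (K := K) none hS = oneX from rfl, d_one hd, hφ.map_one, d_one hd]
      exact hdφ.linear.map_zero
    · cases S with
      | leaf v =>
        cases v with
        | vy => exact absurd hS (by simp [degy, PTree.countLeaf])
        | vx =>
          rw [show monoX (K := K) (some (.leaf .vx)) hS = xX from rfl, hd.map_X, hdφ.map_Y,
            hφ.map_X]
      | node t1 t2 rest =>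
        set cs : List PT := some t1 :: some t2 :: rest.map some with hcs
        have hdy : ∀ x ∈ cs, degy x = 0 := degy_children hS
        have hszn : ptSize (some (PTree.node t1 t2 rest)) = sizeOf (PTree.node t1 t2 rest) := rfl
        rw [hszn] at hlt
        set ms : List (Kx K) := cs.attach.map (fun x => monoX x.1 (hdy x.1 x.2)) with hms
        clear_value ms
        have hmslen : ms.length = cs.length := by simp [hms]
        have hlen2 : 2 ≤ cs.length := by simp [hcs]
        have hms2 : 2 ≤ ms.length := by omega
        have key0 : ms.map (fun f => f.1) = cs.map mono := by
          rw [hms, List.map_map]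
          exact List.attach_map_val (l := cs) (f := fun x => mono x)
        have hbx : bulletX ms = monoX (some (.node t1 t2 rest)) hS := by
          apply Subtype.ext
          rw [bulletX_coe, key0, graft_map_mono, graft_children]
          rfl
        rw [← hbx, hd.leibniz ms hms2, hφ.map_graft ms hms2,
          hd.leibniz (ms.map φ) (by simpa using hms2)]
        have hD : dφ (∑ i : Fin ms.length,
              bullet ((ms.map fun f => f.1).set i.1 (d (ms.get i))))
            = ∑ i : Fin ms.length,
              dφ (bullet ((ms.map fun f => f.1).set i.1 (d (ms.get i)))) :=
          map_sum (hdφ.linear.mk' dφ) _ _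
        rw [hD]
        apply sum_fin_congr (by simp)
        intro i hi
        have hseti : 2 ≤ ((ms.map fun f => f.1).set i (d (ms.get ⟨i, hi⟩))).length := by
          rw [List.length_set, List.length_map]
          omega
        rw [hdφ.map_graft _ hseti, List.map_set]
        have hlists : (ms.map (fun f => f.1)).map dφ = (ms.map φ).map (fun f => f.1) := by
          rw [List.map_map, List.map_map]
          exact List.map_congr_left (fun a _ => hrestr a)
        have hval : dφ (d (ms.get ⟨i, hi⟩))
            = d ((ms.map φ).get ⟨i, by simpa using hi⟩) := by
          have hgm : (ms.map φ).get ⟨i, by simpa using hi⟩ = φ (ms.get ⟨i, hi⟩) := by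
            simp [List.get_eq_getElem, List.getElem_map]
          rw [hgm]
          have hia : i < cs.attach.length := by
            rw [List.length_attach]
            omega
          have hgms : ms.get ⟨i, hi⟩ = monoX (cs.attach.get ⟨i, hia⟩).1
              (hdy (cs.attach.get ⟨i, hia⟩).1 (cs.attach.get ⟨i, hia⟩).2) := by
            simp [hms, List.get_eq_getElem, List.getElem_map]
          rw [hgms]
          exact IH _
            (lt_of_lt_of_le (size_lt_children (cs.attach.get ⟨i, hia⟩).2) (by omega)) _
        rw [hlists, hval]

end Planar

open Planar in
/-- Planar chain rule: for `g ∈ K{{x}}` with `ord_x(g) ≥ 1`,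
`φ = φ_g : K{{x}} → K{{x}}` the continuous `K`-algebra homomorphism with `φ(x) = g`,
and `dφ : K{{x,y} → K{{x,y}` the continuous `K`-algebra homomorphism with `dφ(x) = g`
and `dφ(y) = dg`, one has `(dφ) ∘ d = d ∘ φ` on `K{{x}}`. -/
theorem planar_chain_rule (K : Type) [Field K]
    (g : Kx K) (hg : 1 ≤ ordx g.1)
    (φ : Kx K → Kx K) (hφ : IsSubstHomX g φ)
    (d : Kx K → PSer K) (hd : IsUDeriv d)
    (dφ : PSer K → PSer K) (hdφ : IsSubstHom g.1 (d g) dφ) :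
    ∀ f : Kx K, dφ (d f) = d (φ f) := by
  intro f
  have hrestr : ∀ h : Kx K, dφ h.1 = (φ h).1 := by
    intro h
    refine ext_of_monoX (F := fun h : Kx K => dφ h.1) (G := fun h : Kx K => (φ h).1)
      ?_ ?_ ?_ ?_ ?_ h
    · exact ⟨fun a b => hdφ.linear.map_add a.1 b.1, fun c a => hdφ.linear.map_smul c a.1⟩
    · constructor
      · intro a b
        rw [hφ.linear.map_add]
        rfl
      · intro c a
        rw [hφ.linear.map_smul]
        rfl
    · intro a ε hε
      obtain ⟨δ, hδ, hc⟩ := hdφ.cont a.1 ε hε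
      exact ⟨δ, hδ, fun b hb => hc b.1 hb⟩
    · intro a ε hε
      obtain ⟨δ, hδ, hc⟩ := hφ.cont a ε hε
      exact ⟨δ, hδ, fun b hb => hc b hb⟩
    · intro S hS
      exact dphi_mono hφ hdφ S hS
  refine ext_of_monoX (F := fun h : Kx K => dφ (d h)) (G := fun h : Kx K => d (φ h))
    ?_ ?_ ?_ ?_ ?_ f
  · constructor
    · intro a b
      rw [hd.linear.map_add, hdφ.linear.map_add]
    · intro c a
      rw [hd.linear.map_smul, hdφ.linear.map_smul]
  · constructor
    · intro a b
      rw [hφ.linear.map_add, hd.linear.map_add]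
    · intro c a
      rw [hφ.linear.map_smul, hd.linear.map_smul]
  · intro a ε hε
    obtain ⟨δ1, hδ1, h1⟩ := hdφ.cont (d a) ε hε
    obtain ⟨δ2, hδ2, h2⟩ := hd.cont a δ1 hδ1
    exact ⟨δ2, hδ2, fun b hb => h1 _ (h2 b hb)⟩
  · intro a ε hε
    obtain ⟨δ1, hδ1, h1⟩ := hd.cont (φ a) ε hε
    obtain ⟨δ2, hδ2, h2⟩ := hφ.cont a δ1 hδ1
    exact ⟨δ2, hδ2, fun b hb => h1 _ (h2 b hb)⟩
  · intro S hS
    exact chain_mono hφ hd hdφ hrestr S hS
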